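/- For every dimension d ≥ 1 there is a constant C = C(d) > 0 such that for every n ≥ 1, every family of points v_1, …, v_n ∈ [0,1]^d, and every minimal spanning tree T over v_1, …, v_n, one has Σ_{{i,j} ∈ E(T)} ‖v_i − v_j‖^d ≤ C^d; in particular the bound is independent of n. -/

import Mathlib

/-- The `α`-energy of a graph `T` on vertex set `Fin n`, with vertex `i` placed at
`v i` in the metric space `X`: the sum over the edges `{i,j}` of `T` of
`dist (v i) (v j) ^ α`. -/
noncomputable def energy {X : Type*} [MetricSpace X] {n : ℕ} (v : Fin n → X)
    (T : SimpleGraph (Fin n)) (α : ℝ) : ℝ :=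
  ∑ e ∈ T.edgeSet.toFinite.toFinset,
    Sym2.lift ⟨fun i j => dist (v i) (v j) ^ α, fun i j => by simp only [dist_comm]⟩ e

/-- `T` is a minimal spanning tree over the points `v 0, …, v (n-1)`: it is a tree on
the vertex set `Fin n` minimizing the total edge length `E₁` among all such trees. -/
def IsMST {X : Type*} [MetricSpace X] {n : ℕ} (v : Fin n → X)
    (T : SimpleGraph (Fin n)) : Prop :=
  T.IsTree ∧ ∀ T' : SimpleGraph (Fin n), T'.IsTree → energy v T 1 ≤ energy v T' 1

open SimpleGraph Metric MeasureTheory Finset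

namespace MSTproof

variable {V : Type*}

lemma reachable_of_forall_adj {G H : SimpleGraph V}
    (h : ∀ p q : V, G.Adj p q → H.Reachable p q) :
    ∀ {u w : V}, G.Reachable u w → H.Reachable u w := by
  intro u w hr
  obtain ⟨p⟩ := hr
  induction p with
  | nil => exact Reachable.refl _
  | cons ha _ ih => exact (h _ _ ha).trans ih

lemma reach_side_aux {T : SimpleGraph V} {c d u z : V} (p : T.Walk u z) :
    (T.deleteEdges {s(c,d)}).Reachable u z ∨ (T.deleteEdges {s(c,d)}).Reachable u c ∨
      (T.deleteEdges {s(c,d)}).Reachable u d := by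
  induction p with
  | nil => exact Or.inl (Reachable.refl _)
  | @cons u q z ha p ih =>
    by_cases hpq : s(u, q) = s(c, d)
    · rw [Sym2.eq_iff] at hpq
      rcases hpq with ⟨rfl, rfl⟩ | ⟨rfl, rfl⟩
      · exact Or.inr (Or.inl (Reachable.refl _))
      · exact Or.inr (Or.inr (Reachable.refl _))
    · have hadj : (T.deleteEdges {s(c,d)}).Adj u q := by
        simp only [SimpleGraph.deleteEdges_adj, Set.mem_singleton_iff]
        exact ⟨ha, hpq⟩
      rcases ih with h | h | h
      · exact Or.inl (hadj.reachable.trans h)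
      · exact Or.inr (Or.inl (hadj.reachable.trans h))
      · exact Or.inr (Or.inr (hadj.reachable.trans h))

lemma reach_side {T : SimpleGraph V} {c d u : V} (hu : T.Reachable u c) :
    (T.deleteEdges {s(c,d)}).Reachable u c ∨ (T.deleteEdges {s(c,d)}).Reachable u d := by
  obtain ⟨p⟩ := hu
  rcases reach_side_aux (c := c) (d := d) p with h | h | h
  · exact Or.inl h
  · exact Or.inl h
  · exact Or.inr h

lemma cut_property {X : Type*} [MetricSpace X] {n : ℕ} {v : Fin n → X}
    {T : SimpleGraph (Fin n)} (hT : IsMST v T) {a b x y : Fin n} (hab : T.Adj a b)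
    (hax : (T.deleteEdges {s(a,b)}).Reachable a x)
    (hby : (T.deleteEdges {s(a,b)}).Reachable b y) :
    dist (v a) (v b) ≤ dist (v x) (v y) := by
  classical
  set G := T.deleteEdges {s(a,b)} with hG
  have hbridge : ¬ G.Reachable a b := by
    have h := (isAcyclic_iff_forall_adj_isBridge.mp hT.1.2) hab
    rw [isBridge_iff] at h
    exact h
  have hxy : x ≠ y := by rintro rfl; exact hbridge (hax.trans hby.symm)
  have hGxy : ¬ G.Adj x y := fun h => hbridge (hax.trans (h.reachable.trans hby.symm))
  set T' : SimpleGraph (Fin n) := G ⊔ edge x y with hT'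
  have hGle : G ≤ T' := le_sup_left
  have hT'xy : T'.Adj x y := by
    rw [hT', sup_adj, edge_adj]
    exact Or.inr ⟨Or.inl ⟨rfl, rfl⟩, hxy⟩
  have hreachab : T'.Reachable a b :=
    ((hax.mono hGle).trans hT'xy.reachable).trans (hby.mono hGle).symm
  have hreach : ∀ p q : Fin n, T.Adj p q → T'.Reachable p q := by
    intro p q hpq
    by_cases h : s(p, q) = s(a, b)
    · rw [Sym2.eq_iff] at h
      rcases h with ⟨rfl, rfl⟩ | ⟨rfl, rfl⟩
      · exact hreachab
      · exact hreachab.symm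
    · have hGpq : G.Adj p q := by
        simp only [hG, SimpleGraph.deleteEdges_adj, Set.mem_singleton_iff]
        exact ⟨hpq, h⟩
      exact hGpq.reachable.mono hGle
  haveI : Nonempty (Fin n) := ⟨a⟩
  have hconn : T'.Connected :=
    ⟨fun u w => reachable_of_forall_adj hreach (hT.1.1.preconnected u w)⟩
  have hacyc : T'.IsAcyclic := by
    intro u c hc
    by_cases he : s(x,y) ∈ c.edges
    · have h2 : T'.Adj x y ∧ (T' \ fromEdgeSet {s(x,y)}).Reachable x y :=
        adj_and_reachable_delete_edges_iff_exists_cycle.mpr ⟨u, c, hc, he⟩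
      have hle : T' \ fromEdgeSet {s(x,y)} ≤ G := by
        rw [hT']
        calc (G ⊔ edge x y) \ edge x y = G \ edge x y := sup_sdiff_right_self
        _ ≤ G := sdiff_le
      exact hbridge (hax.trans ((h2.2.mono hle).trans hby.symm))
    · have hedges : ∀ e ∈ c.edges, e ∈ T.edgeSet := by
        intro e hce
        have h3 := c.edges_subset_edgeSet hce
        rw [hT', edgeSet_sup] at h3
        rcases h3 with h3 | h3
        · rw [hG, edgeSet_deleteEdges] at h3
          exact h3.1
        · exfalso
          rw [edge, edgeSet_fromEdgeSet] at h3
          obtain ⟨h4, -⟩ := h3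
          rw [Set.mem_singleton_iff] at h4
          exact he (h4 ▸ hce)
      exact hT.1.2 (c.transfer T hedges) (hc.transfer hedges)
  have hmin := hT.2 T' ⟨hconn, hacyc⟩
  have hS' : T'.edgeSet.toFinite.toFinset
      = insert s(x,y) ((T.edgeSet.toFinite.toFinset).erase s(a,b)) := by
    ext e
    simp only [Set.Finite.mem_toFinset, Finset.mem_insert, Finset.mem_erase,
      hT', edgeSet_sup, hG, edgeSet_deleteEdges, edge, edgeSet_fromEdgeSet,
      Set.mem_union, Set.mem_diff, Set.mem_singleton_iff, Set.mem_setOf_eq,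
      Sym2.isDiag_iff_proj_eq]
    constructor
    · rintro (⟨h1, h2⟩ | ⟨h1, -⟩)
      · exact Or.inr ⟨h2, h1⟩
      · exact Or.inl h1
    · rintro (rfl | ⟨h1, h2⟩)
      · exact Or.inr ⟨rfl, hxy⟩
      · exact Or.inl ⟨h2, h1⟩
  set w : Sym2 (Fin n) → ℝ :=
    Sym2.lift ⟨fun i j => dist (v i) (v j) ^ (1:ℝ), fun i j => by simp only [_root_.dist_comm]⟩
    with hw
  have habS : s(a,b) ∈ T.edgeSet.toFinite.toFinset := by
    rw [Set.Finite.mem_toFinset, mem_edgeSet]; exact hab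
  have hxyS : s(x,y) ∉ (T.edgeSet.toFinite.toFinset).erase s(a,b) := by
    intro h
    rw [Finset.mem_erase, Set.Finite.mem_toFinset, mem_edgeSet] at h
    refine hGxy ?_
    simp only [hG, SimpleGraph.deleteEdges_adj, Set.mem_singleton_iff]
    exact ⟨h.2, h.1⟩
  have hsum : energy v T' 1 = w s(x,y) + (energy v T 1 - w s(a,b)) := by
    show (∑ e ∈ T'.edgeSet.toFinite.toFinset, w e) = _
    rw [hS', Finset.sum_insert hxyS]
    congr 1
    have h6 := Finset.sum_erase_add (T.edgeSet.toFinite.toFinset) w habS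
    have henergy : energy v T 1 = ∑ e ∈ T.edgeSet.toFinite.toFinset, w e := rfl
    rw [henergy]
    linarith
  rw [hsum] at hmin
  have h5 : w s(a,b) ≤ w s(x,y) := by linarith
  rw [hw] at h5
  simp only [Sym2.lift_mk, Real.rpow_one] at h5
  exact h5



lemma key_geo {E : Type*} [NormedAddCommGroup E] [InnerProductSpace ℝ E]
    {A B C D : E} (h1 : dist C D ≤ dist A D) (h2 : dist C D ≤ dist B D)
    (h3 : dist A B ≤ dist C D) :
    (1/3) * dist C D ≤ dist ((2⁻¹:ℝ) • (A + B)) ((2⁻¹:ℝ) • (C + D)) := by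
  set L := dist C D with hL
  have hL0 : 0 ≤ L := dist_nonneg
  set u := A - D
  set w := B - D
  have hpar := parallelogram_law_with_norm ℝ u w
  have h1' : L ≤ ‖u‖ := by rw [← dist_eq_norm] at *; exact h1
  have h2' : L ≤ ‖w‖ := by rw [← dist_eq_norm] at *; exact h2
  have h3' : ‖u - w‖ ≤ L := by
    have huw : u - w = A - B := by simp only [u, w]; abel
    rw [huw, ← dist_eq_norm]; exact h3
  have hz : 3 * L^2 ≤ ‖u + w‖^2 := by
    nlinarith [norm_nonneg (u - w), norm_nonneg (u + w), norm_nonneg u, norm_nonneg w]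
  have hz' : (5/3) * L ≤ ‖u + w‖ := by
    nlinarith [norm_nonneg (u + w)]
  have hdist : dist ((2⁻¹:ℝ) • (A + B)) ((2⁻¹:ℝ) • (C + D))
      = 2⁻¹ * ‖(A + B) - (C + D)‖ := by
    rw [dist_eq_norm, ← smul_sub, norm_smul]
    norm_num
  have hsplit : (A + B) - (C + D) = (u + w) - (C - D) := by
    simp only [u, w]; abel
  have h4 : ‖u + w‖ - ‖C - D‖ ≤ ‖(A + B) - (C + D)‖ := by
    rw [hsplit]; exact norm_sub_norm_le _ _
  have h5 : ‖C - D‖ = L := by rw [← dist_eq_norm]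
  rw [hdist]
  linarith

noncomputable def len {X : Type*} [MetricSpace X] {n : ℕ} (v : Fin n → X) :
    Sym2 (Fin n) → ℝ :=
  Sym2.lift ⟨fun i j => dist (v i) (v j), fun i j => _root_.dist_comm _ _⟩

noncomputable def mid {d n : ℕ} (v : Fin n → EuclideanSpace ℝ (Fin d)) :
    Sym2 (Fin n) → EuclideanSpace ℝ (Fin d) :=
  Sym2.lift ⟨fun i j => (2⁻¹ : ℝ) • (v i + v j), fun i j => by
    show (2⁻¹ : ℝ) • (v i + v j) = (2⁻¹ : ℝ) • (v j + v i); rw [add_comm]⟩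

lemma len_nonneg {X : Type*} [MetricSpace X] {n : ℕ} (v : Fin n → X) (e : Sym2 (Fin n)) :
    0 ≤ len v e := by
  induction e using Sym2.ind with
  | _ a b => simp only [len, Sym2.lift_mk]; exact dist_nonneg

/-- Key separation lemma, asymmetric version. -/
lemma key_sep {d n : ℕ} {v : Fin n → EuclideanSpace ℝ (Fin d)} {T : SimpleGraph (Fin n)}
    (hT : IsMST v T) {a b c e : Fin n} (hab : T.Adj a b) (hcd : T.Adj c e)
    (hne : s(a,b) ≠ s(c,e)) (hle : dist (v a) (v b) ≤ dist (v c) (v e))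
    (hside : (T.deleteEdges {s(c,e)}).Reachable c a) :
    (1/3) * dist (v c) (v e) ≤ dist ((2⁻¹:ℝ) • (v a + v b)) ((2⁻¹:ℝ) • (v c + v e)) := by
  have hGab : (T.deleteEdges {s(c,e)}).Adj a b := by
    simp only [SimpleGraph.deleteEdges_adj, Set.mem_singleton_iff]
    exact ⟨hab, hne⟩
  have h1 : dist (v c) (v e) ≤ dist (v a) (v e) :=
    cut_property hT hcd hside (Reachable.refl _)
  have h2 : dist (v c) (v e) ≤ dist (v b) (v e) :=
    cut_property hT hcd (hside.trans hGab.reachable) (Reachable.refl _)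
  exact key_geo h1 h2 hle

/-- Separation of midpoints for two distinct MST edges, ordered version. -/
lemma sep_ordered {d n : ℕ} {v : Fin n → EuclideanSpace ℝ (Fin d)} {T : SimpleGraph (Fin n)}
    (hT : IsMST v T) {e f : Sym2 (Fin n)} (he : e ∈ T.edgeSet) (hf : f ∈ T.edgeSet)
    (hne : e ≠ f) (hlen : len v e ≤ len v f) :
    (1/3) * len v f ≤ dist (mid v e) (mid v f) := by
  induction e using Sym2.ind with
  | _ a b =>
  induction f using Sym2.ind with
  | _ c ee =>
  rw [SimpleGraph.mem_edgeSet] at he hf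
  simp only [len, mid, Sym2.lift_mk] at *
  have hreach : T.Reachable a c := hT.1.1.preconnected a c
  rcases reach_side (d := ee) hreach with hside | hside
  · exact key_sep hT he hf hne hlen hside.symm
  · have hswap : s(c, ee) = s(ee, c) := Sym2.eq_swap
    have h := key_sep (e := c) hT he (hf.symm) (by rw [← hswap]; exact hne)
      (by rw [_root_.dist_comm (v c) (v ee)] at hlen; exact hlen)
      (by rw [← hswap]; exact hside.symm)
    rw [_root_.dist_comm (v c) (v ee), add_comm (v c) (v ee)]
    exact h

/-- Separation of midpoints for two distinct MST edges. -/
lemma sep {d n : ℕ} {v : Fin n → EuclideanSpace ℝ (Fin d)} {T : SimpleGraph (Fin n)}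
    (hT : IsMST v T) {e f : Sym2 (Fin n)} (he : e ∈ T.edgeSet) (hf : f ∈ T.edgeSet)
    (hne : e ≠ f) :
    (1/6) * (len v e + len v f) ≤ dist (mid v e) (mid v f) := by
  rcases le_total (len v e) (len v f) with h | h
  · have := sep_ordered hT he hf hne h
    linarith
  · have := sep_ordered hT hf he (Ne.symm hne) h
    rw [_root_.dist_comm (mid v f) (mid v e)] at this
    linarith

end MSTproof

open MSTproof

/-- For every dimension `d ≥ 1` there is a constant `C = C(d) > 0` such that for all
`n ≥ 1`, all points `v 0, …, v (n-1)` in the cube `[0,1]^d` and every minimal spanning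
tree `T` over them, `E_d(T) = Σ_{e ∈ T} ‖e‖^d ≤ C^d`, independently of `n`. -/
theorem mst_energy_bound_critical (d : ℕ) (hd : 1 ≤ d) :
    ∃ C : ℝ, 0 < C ∧ ∀ n : ℕ, 1 ≤ n →
      ∀ v : Fin n → EuclideanSpace ℝ (Fin d), (∀ j i, v j i ∈ Set.Icc (0:ℝ) 1) →
      ∀ T : SimpleGraph (Fin n), IsMST v T →
        energy v T (d : ℝ) ≤ C ^ (d : ℝ) := by
  classical
  haveI : Nonempty (Fin d) := ⟨⟨0, hd⟩⟩
  set R : ℝ := 2 * Real.sqrt d + 1 with hR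
  have hsd : 0 ≤ Real.sqrt d := Real.sqrt_nonneg _
  have hR0 : 0 < R := by positivity
  refine ⟨6 * R, by positivity, ?_⟩
  intro n hn v hv T hT
  set S := T.edgeSet.toFinite.toFinset with hS
  have hnorm : ∀ j : Fin n, ‖v j‖ ≤ Real.sqrt d := by
    intro j
    rw [EuclideanSpace.norm_eq]
    have h1 : ∑ i, ‖v j i‖ ^ 2 ≤ (d : ℝ) := by
      calc ∑ i, ‖v j i‖ ^ 2 ≤ ∑ _i : Fin d, (1:ℝ) := by
            apply Finset.sum_le_sum
            intro i _
            have h2 := hv j i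
            rw [Set.mem_Icc] at h2
            rw [Real.norm_eq_abs, abs_of_nonneg h2.1]
            nlinarith [h2.1, h2.2]
        _ = (d : ℝ) := by simp
    calc Real.sqrt (∑ i, ‖v j i‖ ^ 2) ≤ Real.sqrt d := Real.sqrt_le_sqrt h1
      _ = Real.sqrt d := rfl
  have hlen_le : ∀ e : Sym2 (Fin n), len v e ≤ 2 * Real.sqrt d := by
    intro e
    induction e using Sym2.ind with
    | _ a b =>
      simp only [len, Sym2.lift_mk]
      calc dist (v a) (v b) ≤ ‖v a‖ + ‖v b‖ := by
            rw [dist_eq_norm]; exact norm_sub_le _ _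
        _ ≤ 2 * Real.sqrt d := by have := hnorm a; have := hnorm b; linarith
  have hmid_le : ∀ e : Sym2 (Fin n), ‖mid v e‖ ≤ Real.sqrt d := by
    intro e
    induction e using Sym2.ind with
    | _ a b =>
      simp only [mid, Sym2.lift_mk]
      rw [norm_smul]
      calc ‖(2⁻¹:ℝ)‖ * ‖v a + v b‖ ≤ 2⁻¹ * (‖v a‖ + ‖v b‖) := by
            rw [Real.norm_eq_abs, abs_of_nonneg (by norm_num : (0:ℝ) ≤ 2⁻¹)]
            have := norm_add_le (v a) (v b)
            nlinarith [norm_nonneg (v a + v b)]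
        _ ≤ Real.sqrt d := by have := hnorm a; have := hnorm b; linarith
  set Bset : Sym2 (Fin n) → Set (EuclideanSpace ℝ (Fin d)) :=
    fun e => ball (mid v e) (6⁻¹ * len v e) with hBset
  have hsub : ∀ e : Sym2 (Fin n), Bset e ⊆ ball (0 : EuclideanSpace ℝ (Fin d)) R := by
    intro e
    apply ball_subset_ball'
    rw [dist_zero_right]
    have h1 := hlen_le e
    have h2 := hmid_le e
    rw [hR]
    linarith
  have hdisj : (↑S : Set (Sym2 (Fin n))).PairwiseDisjoint Bset := by
    intro e he f hf hne
    have he' : e ∈ T.edgeSet := by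
      rw [← Set.Finite.mem_toFinset T.edgeSet.toFinite]; exact he
    have hf' : f ∈ T.edgeSet := by
      rw [← Set.Finite.mem_toFinset T.edgeSet.toFinite]; exact hf
    have hs := sep hT he' hf' hne
    apply ball_disjoint_ball
    linarith
  have hmeas : ∀ e ∈ S, MeasurableSet (Bset e) := fun e _ => measurableSet_ball
  have hUnion : (∑ e ∈ S, volume (Bset e)) = volume (⋃ e ∈ S, Bset e) :=
    (measure_biUnion_finset hdisj hmeas).symm
  have hle1 : volume (⋃ e ∈ S, Bset e) ≤ volume (ball (0 : EuclideanSpace ℝ (Fin d)) R) :=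
    measure_mono (Set.iUnion₂_subset fun e _ => hsub e)
  set K : ENNReal := ENNReal.ofReal
      (Real.sqrt Real.pi ^ d / Real.Gamma ((d:ℝ) / 2 + 1)) with hK
  have hvol_e : ∀ e ∈ S, volume (Bset e) = ENNReal.ofReal ((6⁻¹ * len v e)^d) * K := by
    intro e _
    have h := EuclideanSpace.volume_ball (Fin d) (mid v e) (6⁻¹ * len v e)
    simp only [Fintype.card_fin] at h
    rw [hBset]
    show volume (ball (mid v e) (6⁻¹ * len v e)) = _
    rw [h, hK, ← ENNReal.ofReal_pow (mul_nonneg (by norm_num) (len_nonneg v e))]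
  have hvol_R : volume (ball (0 : EuclideanSpace ℝ (Fin d)) R)
      = ENNReal.ofReal (R^d) * K := by
    have h := EuclideanSpace.volume_ball (Fin d) (0 : EuclideanSpace ℝ (Fin d)) R
    simp only [Fintype.card_fin] at h
    rw [h, hK, ← ENNReal.ofReal_pow hR0.le]
  have hK0 : K ≠ 0 := by
    rw [hK]
    apply ne_of_gt
    apply ENNReal.ofReal_pos.mpr
    apply div_pos (pow_pos (Real.sqrt_pos.mpr Real.pi_pos) _)
    exact Real.Gamma_pos_of_pos (by positivity)
  have hKtop : K ≠ ⊤ := by rw [hK]; exact ENNReal.ofReal_ne_top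
  have hchain : (∑ e ∈ S, ENNReal.ofReal ((6⁻¹ * len v e)^d)) * K
      ≤ ENNReal.ofReal (R^d) * K := by
    calc (∑ e ∈ S, ENNReal.ofReal ((6⁻¹ * len v e)^d)) * K
        = ∑ e ∈ S, ENNReal.ofReal ((6⁻¹ * len v e)^d) * K := Finset.sum_mul _ _ _
      _ = ∑ e ∈ S, volume (Bset e) := by
          exact Finset.sum_congr rfl fun e he => (hvol_e e he).symm
      _ = volume (⋃ e ∈ S, Bset e) := hUnion
      _ ≤ volume (ball (0 : EuclideanSpace ℝ (Fin d)) R) := hle1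
      _ = ENNReal.ofReal (R^d) * K := hvol_R
  have hchain2 : (∑ e ∈ S, ENNReal.ofReal ((6⁻¹ * len v e)^d)) ≤ ENNReal.ofReal (R^d) :=
    (ENNReal.mul_le_mul_iff_left hK0 hKtop).mp hchain
  have hnn : ∀ e ∈ S, 0 ≤ (6⁻¹ * len v e)^d :=
    fun e _ => pow_nonneg (mul_nonneg (by norm_num) (len_nonneg v e)) _
  rw [← ENNReal.ofReal_sum_of_nonneg hnn] at hchain2
  have hfinal : (∑ e ∈ S, (6⁻¹ * len v e)^d) ≤ R^d :=
    (ENNReal.ofReal_le_ofReal_iff (by positivity)).mp hchain2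
  have henergy : energy v T (d : ℝ) = ∑ e ∈ S, (len v e)^d := by
    show (∑ e ∈ T.edgeSet.toFinite.toFinset, _) = _
    rw [← hS]
    refine Finset.sum_congr rfl fun e _ => ?_
    induction e using Sym2.ind with
    | _ a b =>
      simp only [Sym2.lift_mk, len]
      exact Real.rpow_natCast _ d
  have hsplit2 : ∀ e : Sym2 (Fin n), (len v e)^d = 6^d * (6⁻¹ * len v e)^d := by
    intro e
    rw [← mul_pow, ← mul_assoc]
    norm_num
  have h9 : energy v T (d : ℝ) ≤ 6^d * R^d := by
    rw [henergy]
    calc ∑ e ∈ S, (len v e)^d = ∑ e ∈ S, 6^d * (6⁻¹ * len v e)^d :=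
          Finset.sum_congr rfl fun e _ => hsplit2 e
      _ = 6^d * ∑ e ∈ S, (6⁻¹ * len v e)^d := (Finset.mul_sum _ _ _).symm
      _ ≤ 6^d * R^d := by
          apply mul_le_mul_of_nonneg_left hfinal (by positivity)
  calc energy v T (d : ℝ) ≤ 6^d * R^d := h9
    _ = (6 * R)^d := (mul_pow _ _ _).symm
    _ = (6 * R) ^ (d : ℝ) := (Real.rpow_natCast _ d).symm
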